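/- For all a ∈ A and all x ∈ Ae₁ + Ae₂ + Ae₃ one has x·(a e₀) = a* x. -/

import Mathlib

open LaurentPolynomial

/-- `A = ℤ[z, z⁻¹]`, the Laurent polynomial ring over the integers. -/
abbrev A : Type := LaurentPolynomial ℤ

/-- The conjugation `f(z) ↦ f(z⁻¹)` on `A`. -/
noncomputable def conj : A →+* A := (LaurentPolynomial.invert (R := ℤ)).toRingEquiv.toRingHom

/-- The fixed subring `A₀ = {f ∈ A | f* = f}`. -/
noncomputable def A0 : Subring A := RingHom.eqLocus conj (RingHom.id A)

/-- `E = A⁴`. -/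
abbrev E : Type := Fin 4 → A

/-- The norm `N(x) = ∑ₖ xₖ xₖ*`. -/
noncomputable def N (x : E) : A := ∑ k, x k * conj (x k)

/-- The standard `A`-basis vectors of `E = A⁴`. -/
noncomputable def e (k : Fin 4) : E := Pi.single k 1

/-- Yang's multiplication `x ∘ y = (p, q, r, s)`. -/
noncomputable def yang (x y : E) : E :=
  ![x 0 * y 0 - x 1 * conj (y 1) - x 2 * conj (y 2) - x 3 * conj (y 3),
    x 0 * y 1 + x 1 * conj (y 0) + conj (x 2) * conj (y 3) - conj (x 3) * conj (y 2),
    x 0 * y 2 - conj (x 1) * conj (y 3) + x 2 * conj (y 0) + conj (x 3) * conj (y 1),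
    x 0 * y 3 + conj (x 1) * conj (y 2) - conj (x 2) * conj (y 1) + x 3 * conj (y 0)]

/- ### Auxiliary lemmas -/

lemma conj_def (f : A) : conj f = invert f := rfl

lemma conj_conj (f : A) : conj (conj f) = f := involutive_invert f

lemma conj_T (n : ℤ) : conj (T n) = T (-n) := invert_T n

lemma conj_apply' (f : A) (n : ℤ) : (conj f).coeff n = f.coeff (-n) := invert_apply f n

/-- The sesquilinear inner product on `E`. -/
noncomputable def inn (x y : E) : A := ∑ k, x k * conj (y k)

lemma N_inn (x : E) : N x = inn x x := rfl

lemma conj_inn (x y : E) : conj (inn x y) = inn y x := by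
  simp only [inn, map_sum, map_mul, conj_conj]
  exact Finset.sum_congr rfl fun k _ => mul_comm _ _

lemma conj_N (x : E) : conj (N x) = N x := by rw [N_inn, conj_inn]

lemma inn_add_left (x y z : E) : inn (x + y) z = inn x z + inn y z := by
  simp only [inn, Pi.add_apply, add_mul, Finset.sum_add_distrib]

lemma inn_add_right (x y z : E) : inn x (y + z) = inn x y + inn x z := by
  simp only [inn, Pi.add_apply, map_add, mul_add, Finset.sum_add_distrib]

lemma inn_smul_left (a : A) (x y : E) : inn (a • x) y = a * inn x y := by
  simp only [inn, Pi.smul_apply, smul_eq_mul, Finset.mul_sum, mul_assoc]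

lemma inn_smul_right (a : A) (x y : E) : inn x (a • y) = conj a * inn x y := by
  simp only [inn, Pi.smul_apply, smul_eq_mul, map_mul, Finset.mul_sum]
  exact Finset.sum_congr rfl fun k _ => by ring

/-- The polar bilinear form. -/
noncomputable def Bf (x y : E) : A := inn x y + inn y x

lemma Bf_comm (x y : E) : Bf x y = Bf y x := add_comm _ _

lemma Bf_eq (x y : E) : Bf x y = inn x y + conj (inn x y) := by rw [Bf, conj_inn]

lemma Bf_self (x : E) : Bf x x = 2 * N x := by rw [Bf, ← N_inn]; ring

lemma Bf_add_left (x y z : E) : Bf (x + y) z = Bf x z + Bf y z := by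
  simp only [Bf, inn_add_left, inn_add_right]; ring

lemma Bf_add_right (x y z : E) : Bf x (y + z) = Bf x y + Bf x z := by
  simp only [Bf, inn_add_left, inn_add_right]; ring

lemma N_add (x y : E) : N (x + y) = N x + N y + Bf x y := by
  simp only [N_inn, Bf, inn_add_left, inn_add_right]; ring

lemma N_smul (a : A) (x : E) : N (a • x) = a * conj a * N x := by
  simp only [N_inn, inn_smul_left, inn_smul_right]; ring

lemma e00 : e 0 0 = 1 := by simp [e]

lemma inn_e0_right (x : E) : inn x (e 0) = x 0 := by
  simp [inn, e, Fin.sum_univ_four, Pi.single_apply]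

lemma inn_e0_left (x : E) : inn (e 0) x = conj (x 0) := by
  rw [← conj_inn, inn_e0_right]

lemma inn_e0_e0 : inn (e 0) (e 0) = 1 := by rw [inn_e0_right, e00]

lemma N_e0 : N (e 0) = 1 := by rw [N_inn, inn_e0_e0]

lemma T_sub_ne : (T 1 : A) - T (-1) ≠ 0 := by
  apply sub_ne_zero_of_ne
  intro h
  have h2 := congrArg (fun p : A => p.coeff 1) h
  simp only [T_apply] at h2
  norm_num at h2

lemma mul_coeff_zero (f g : A) : (f * g).coeff 0 = ∑ a ∈ f.coeff.support, f.coeff a * g.coeff (-a) := by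
  rw [AddMonoidAlgebra.coeff_mul, Finsupp.sum]
  refine Finset.sum_congr rfl fun a _ => ?_
  rw [Finsupp.sum]
  have h1 : ∀ b : ℤ, (if a + b = 0 then f.coeff a * g.coeff b else 0) = if b = -a then f.coeff a * g.coeff b else 0 := by
    intro b; apply if_congr _ rfl rfl; omega
  rw [Finset.sum_congr rfl fun b _ => h1 b,
    Finset.sum_ite_eq' g.coeff.support (-a) (fun b => f.coeff a * g.coeff b)]
  split_ifs with hm
  · rfl
  · rw [Finsupp.notMem_support_iff.mp hm, mul_zero]

lemma mul_conj_coeff (f : A) : (f * conj f).coeff 0 = ∑ a ∈ f.coeff.support, f.coeff a * f.coeff a := by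
  rw [mul_coeff_zero]
  exact Finset.sum_congr rfl fun a _ => by rw [conj_apply', neg_neg]

lemma N_eq_zero {x : E} (h : N x = 0) : x = 0 := by
  have h0 := congrArg (fun p : A => p.coeff 0) h
  simp only [N] at h0
  rw [AddMonoidAlgebra.coeff_sum, Finset.sum_apply'] at h0
  simp only [AddMonoidAlgebra.coeff_zero, Finsupp.coe_zero, Pi.zero_apply] at h0
  have hnn : ∀ k : Fin 4, 0 ≤ (x k * conj (x k)).coeff 0 := by
    intro k
    rw [mul_conj_coeff]
    exact Finset.sum_nonneg fun a _ => mul_self_nonneg _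
  have hk : ∀ k ∈ Finset.univ, (x k * conj (x k)).coeff 0 = 0 :=
    (Finset.sum_eq_zero_iff_of_nonneg (fun k _ => hnn k)).mp h0
  funext k
  have h2 := hk k (Finset.mem_univ k)
  rw [mul_conj_coeff] at h2
  have h3 := (Finset.sum_eq_zero_iff_of_nonneg (fun a _ => mul_self_nonneg _)).mp h2
  show x k = 0
  ext n
  by_cases hn : n ∈ (x k).coeff.support
  · exact mul_self_eq_zero.mp (h3 n hn)
  · exact Finsupp.notMem_support_iff.mp hn

lemma Trec (n : ℤ) : ((T 1 : A) + T (-1)) * T n = T (n + 1) + T (n - 1) := by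
  rw [add_mul, ← T_add, ← T_add, show (1 : ℤ) + n = n + 1 by ring,
    show (-1 : ℤ) + n = n - 1 by ring]

set_option maxHeartbeats 1600000 in
/-- Lemma 4.5: for all `a ∈ A` and all `x ∈ Ae₁ + Ae₂ + Ae₃` (i.e. `x₀ = 0`),
`x·(a e₀) = a* x`. -/
theorem right_scalar_action (mul : E →ₗ[A0] E →ₗ[A0] E)
    (hL : ∀ x y : E, N (mul x y) = N x * N y)
    (hid : ∀ x : E, mul (e 0) x = x ∧ mul x (e 0) = x)
    (hA : ∀ (a : A) (y : E), mul (a • e 0) y = a • y) :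
    ∀ (a : A) (x : E), x 0 = 0 → mul x (a • e 0) = conj a • x := by
  have me0 : ∀ w : E, mul (e 0) w = w := fun w => (hid w).1
  have mxe : ∀ w : E, mul w (e 0) = w := fun w => (hid w).2
  have madd2 : ∀ (w p q : E), mul w (p + q) = mul w p + mul w q :=
    fun w p q => map_add (mul w) p q
  have madd1 : ∀ (w w' p : E), mul (w + w') p = mul w p + mul w' p := by
    intro w w' p
    rw [map_add]
    rfl
  have hsmul : ∀ (b : A), conj b = b → ∀ (w v : E), mul w (b • v) = b • mul w v := by
    intro b hb w v
    have h1 : b • v = (⟨b, hb⟩ : A0) • v := rfl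
    have h2 : b • (mul w v : E) = (⟨b, hb⟩ : A0) • (mul w v : E) := rfl
    rw [h1, h2, map_smul]
  have step1 : ∀ w p q : E, Bf (mul w p) (mul w q) = N w * Bf p q := by
    intro w p q
    have h1 : N (mul w p + mul w q) = N w * N (p + q) := by
      rw [← madd2]; exact hL w (p + q)
    rw [N_add, N_add, hL w p, hL w q] at h1
    linear_combination h1
  have polar : ∀ w w' p q : E,
      Bf (mul w p) (mul w' q) + Bf (mul w q) (mul w' p) = Bf w w' * Bf p q := by
    intro w w' p q
    have h1 : Bf (mul (w + w') p) (mul (w + w') q) = N (w + w') * Bf p q := step1 (w + w') p q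
    rw [madd1, madd1, N_add, Bf_add_left, Bf_add_right, Bf_add_right,
      step1 w p q, step1 w' p q, Bf_comm (mul w' p) (mul w q)] at h1
    linear_combination h1
  -- the key special case `a = z`
  have hz' : conj (T 1 : A) = T (-1) := conj_T 1
  have hz : conj (T (-1) : A) = T 1 := by rw [conj_T, neg_neg]
  have key1 : ∀ v : E, v 0 = 0 → mul v ((T 1 : A) • e 0) = (T (-1) : A) • v := by
    intro v hv
    have hNc : conj (N v) = N v := conj_N v
    have hBve : Bf v (e 0) = 0 := by
      rw [Bf, inn_e0_left, inn_e0_right, hv, map_zero, add_zero]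
    have hBvu : Bf v ((T 1 : A) • e 0) = 0 := by
      rw [Bf, inn_smul_right, inn_smul_left, inn_e0_left, inn_e0_right, hv,
        map_zero, mul_zero, mul_zero, add_zero]
    have hBue : Bf ((T 1 : A) • e 0) (e 0) = T 1 + T (-1) := by
      rw [Bf, inn_smul_left, inn_smul_right, inn_e0_e0, hz']
      ring
    have hanti : ∀ p q : E, Bf (mul v p) q + Bf (mul v q) p = 0 := by
      intro p q
      have h := polar v (e 0) p q
      rw [me0, me0, hBve, zero_mul] at h
      exact h
    have hA1 : Bf (mul v ((T 1 : A) • e 0)) v = (T 1 + T (-1)) * N v := by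
      have h := step1 v ((T 1 : A) • e 0) (e 0)
      rw [mxe, hBue] at h
      linear_combination h
    have hM1 : inn (mul v v) (e 0) + conj (inn (mul v v) (e 0)) = -(2 * N v) := by
      have h := hanti v (e 0)
      rw [mxe, Bf_eq (mul v v) (e 0), Bf_self] at h
      linear_combination h
    have hM2 : T (-1) * inn (mul v v) (e 0) + T 1 * conj (inn (mul v v) (e 0))
        = -((T 1 + T (-1)) * N v) := by
      have h := hanti v ((T 1 : A) • e 0)
      rw [hA1, Bf, inn_smul_right, inn_smul_left, hz',
        ← conj_inn (mul v v) (e 0)] at h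
      linear_combination h
    have hm : inn (mul v v) (e 0) = -(N v) := by
      apply mul_left_cancel₀ T_sub_ne
      linear_combination T 1 * hM1 - hM2
    have hcm : conj (inn (mul v v) (e 0)) = -(N v) := by linear_combination hM1 - hm
    have hC : T (-1) * inn (mul v ((T 1 : A) • e 0)) v + T 1 * conj (inn (mul v ((T 1 : A) • e 0)) v)
        = (T 1 * T 1 + T (-1) * T (-1)) * N v := by
      have h := polar v ((T 1 : A) • e 0) ((T 1 : A) • e 0) v
      rw [hA (T 1) v, hA (T 1) ((T 1 : A) • e 0), smul_smul, hBvu, zero_mul,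
        Bf, Bf, inn_smul_right, inn_smul_left, inn_smul_right, inn_smul_left,
        ← conj_inn (mul v ((T 1 : A) • e 0)) v, ← conj_inn (mul v v) (e 0),
        map_mul, hz', hcm, hm] at h
      linear_combination h
    have hA1' : inn (mul v ((T 1 : A) • e 0)) v + conj (inn (mul v ((T 1 : A) • e 0)) v)
        = (T 1 + T (-1)) * N v := by
      rw [← Bf_eq]; exact hA1
    have hc : inn (mul v ((T 1 : A) • e 0)) v = T (-1) * N v := by
      apply mul_left_cancel₀ T_sub_ne
      linear_combination T 1 * hA1' - hC
    have hcc : conj (inn (mul v ((T 1 : A) • e 0)) v) = T 1 * N v := by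
      rw [hc, map_mul, hz, hNc]
    have hNy : N (mul v ((T 1 : A) • e 0)) = N v * (T 1 * conj (T 1) * N (e 0)) := by
      rw [hL, N_smul]
    have hw : N (mul v ((T 1 : A) • e 0) - (T (-1) : A) • v) = 0 := by
      rw [sub_eq_add_neg, ← neg_smul, N_add, N_smul, Bf, inn_smul_right, inn_smul_left,
        ← conj_inn (mul v ((T 1 : A) • e 0)) v, hNy, hcc, hc, N_e0, hz', map_neg, hz]
      ring
    have h0 := N_eq_zero hw
    rwa [sub_eq_zero] at h0
  -- extend to all powers of `T`
  have ht : conj ((T 1 : A) + T (-1)) = T 1 + T (-1) := by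
    rw [map_add, hz, hz', add_comm]
  have key_up : ∀ (v : E) (m : ℤ), mul v ((T m : A) • e 0) = (T (-m) : A) • v →
      mul v ((T (m - 1) : A) • e 0) = (T (-(m - 1)) : A) • v →
      mul v ((T (m + 1) : A) • e 0) = (T (-(m + 1)) : A) • v := by
    intro v m h1 h2
    have e1 : (T (m + 1) : A) • e 0
        = (((T 1 : A) + T (-1)) • ((T m : A) • e 0) : E) - (T (m - 1) : A) • e 0 := by
      rw [smul_smul, Trec m, add_smul, add_sub_cancel_right]
    rw [e1, map_sub, hsmul _ ht, h1, h2, smul_smul, Trec (-m),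
      show -(m - 1) = -m + 1 by ring, show -(m + 1) = -m - 1 by ring,
      add_smul, add_sub_cancel_left]
  have key_down : ∀ (v : E) (m : ℤ), mul v ((T m : A) • e 0) = (T (-m) : A) • v →
      mul v ((T (m + 1) : A) • e 0) = (T (-(m + 1)) : A) • v →
      mul v ((T (m - 1) : A) • e 0) = (T (-(m - 1)) : A) • v := by
    intro v m h1 h2
    have e1 : (T (m - 1) : A) • e 0
        = (((T 1 : A) + T (-1)) • ((T m : A) • e 0) : E) - (T (m + 1) : A) • e 0 := by
      rw [smul_smul, Trec m, add_smul, add_sub_cancel_left]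
    rw [e1, map_sub, hsmul _ ht, h1, h2, smul_smul, Trec (-m),
      show -(m - 1) = -m + 1 by ring, show -(m + 1) = -m - 1 by ring,
      add_smul, add_sub_cancel_right]
  intro a x hx
  have keyT : ∀ n : ℤ, mul x ((T n : A) • e 0) = (T (-n) : A) • x := by
    have Q0 : mul x ((T 0 : A) • e 0) = (T 0 : A) • x := by
      rw [T_zero, one_smul, one_smul]; exact mxe x
    have hP : ∀ n : ℤ, mul x ((T n : A) • e 0) = (T (-n) : A) • x ∧
        mul x ((T (n + 1) : A) • e 0) = (T (-(n + 1)) : A) • x := by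
      intro n
      induction n using Int.induction_on with
      | zero =>
        constructor
        · rw [show -(0 : ℤ) = 0 by ring]; exact Q0
        · rw [show (0 : ℤ) + 1 = 1 by ring]
          exact key1 x hx
      | succ k ih =>
        refine ⟨ih.2, ?_⟩
        have := key_up x (k + 1) ih.2 (by rw [show (k : ℤ) + 1 - 1 = k by ring]; exact ih.1)
        exact this
      | pred k ih =>
        refine ⟨?_, by rw [show (-(k : ℤ) - 1) + 1 = -k by ring]; exact ih.1⟩
        have := key_down x (-k) ih.1 (by rw [show (-(k : ℤ)) + 1 = -k + 1 by ring]; exact ih.2)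
        rw [show (-(k : ℤ)) - 1 = -k - 1 by ring] at this
        exact this
    exact fun n => (hP n).1
  -- conclude by induction on `a`
  induction a using LaurentPolynomial.induction_on' with
  | add p q hp hq =>
    rw [add_smul, madd2, hp, hq, map_add, add_smul]
  | C_mul_T n r =>
    have hCr : conj (C r) = C r := invert_C r
    rw [mul_smul, hsmul _ hCr, keyT n, smul_smul, map_mul, hCr, conj_T, mul_smul]
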